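/- Let R be a finitely generated free group and S a finite simple group. Then there exists a natural number k such that the quotient R/R(S) is isomorphic to the direct power S^k; in particular, R/R(S) is a finite direct power of S. -/

import Mathlib

/-- `simpleResidual R S` is `R(S)`: the intersection of all normal subgroups
`N` of `R` such that `R/N` is isomorphic to a finite direct power `S^k` of `S`
(equivalently, `N` is the kernel of a surjective homomorphism `R →* S^k`). -/
def simpleResidual (R : Type*) [Group R] (S : Type*) [Group S] : Subgroup R :=
  sInf {N : Subgroup R |
    ∃ (k : ℕ) (f : R →* (Fin k → S)), Function.Surjective f ∧ N = f.ker}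

section Aux

variable {R S : Type*} [Group R] [Group S]

/-- Step lemma: combining a surjection onto `S^k` with a surjection onto `S`. -/
lemma simpleResidual_step [IsSimpleGroup S] {k : ℕ}
    (f : R →* (Fin k → S)) (hf : Function.Surjective f)
    (h : R →* S) (hh : Function.Surjective h) :
    ∃ (k' : ℕ) (g : R →* (Fin k' → S)), Function.Surjective g ∧
      g.ker = f.ker ⊓ h.ker := by
  classical
  set H : Subgroup S :=
    { carrier := {s | ∃ r, f r = 1 ∧ h r = s}
      one_mem' := ⟨1, by simp, by simp⟩
      mul_mem' := by
        rintro a b ⟨r, hr1, hr2⟩ ⟨t, ht1, ht2⟩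
        exact ⟨r * t, by simp [hr1, ht1], by simp [hr2, ht2]⟩
      inv_mem' := by
        rintro a ⟨r, hr1, hr2⟩
        exact ⟨r⁻¹, by simp [hr1], by simp [hr2]⟩ } with hH
  have hHnormal : H.Normal := by
    constructor
    rintro s ⟨r, hr1, hr2⟩ t
    obtain ⟨u, hu⟩ := hh t
    exact ⟨u * r * u⁻¹, by simp [hr1], by simp [hr2, hu]⟩
  rcases hHnormal.eq_bot_or_eq_top with hbot | htop
  · refine ⟨k, f, hf, ?_⟩
    refine le_antisymm (le_inf le_rfl ?_) inf_le_left
    intro r hr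
    have : h r ∈ H := ⟨r, hr, rfl⟩
    rw [hbot] at this
    simpa [MonoidHom.mem_ker] using this
  · -- the combined map is surjective
    set p : R →* (Fin (k + 1) → S) :=
      { toFun := fun r => Fin.snoc (f r) (h r)
        map_one' := by
          funext i
          refine Fin.lastCases ?_ (fun j => ?_) i <;> simp
        map_mul' := by
          intro a b
          funext i
          refine Fin.lastCases ?_ (fun j => ?_) i <;> simp } with hp
    refine ⟨k + 1, p, ?_, ?_⟩
    · intro v
      obtain ⟨r0, hr0⟩ := hf (fun j => v j.castSucc)
      have : v (Fin.last k) * (h r0)⁻¹ ∈ H := by rw [htop]; trivial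
      obtain ⟨r1, hr11, hr12⟩ := this
      refine ⟨r1 * r0, ?_⟩
      funext i
      refine Fin.lastCases ?_ (fun j => ?_) i
      · simp [hp, hr12]
      · simp [hp, hr11, hr0]
    · ext r
      constructor
      · intro hr
        have hr' : (Fin.snoc (f r) (h r) : Fin (k+1) → S) = 1 := hr
        refine ⟨?_, ?_⟩
        · show f r = 1
          funext j
          have := congrFun hr' j.castSucc
          rw [Fin.snoc_castSucc] at this
          simpa using this
        · show h r = 1
          have := congrFun hr' (Fin.last k)
          rw [Fin.snoc_last] at this
          simpa using this
      · rintro ⟨h1, h2⟩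
        simp only [MonoidHom.mem_ker] at h1 h2 ⊢
        show (Fin.snoc (f r) (h r) : Fin (k+1) → S) = 1
        rw [h1, h2]
        funext i
        refine Fin.lastCases ?_ (fun j => ?_) i <;> simp

/-- For any finite set of surjections onto `S`, there is a surjection onto a
power of `S` whose kernel is the intersection of their kernels. -/
lemma simpleResidual_finset [IsSimpleGroup S] (T : Finset (R →* S))
    (hT : ∀ h ∈ T, Function.Surjective h) :
    ∃ (k : ℕ) (f : R →* (Fin k → S)), Function.Surjective f ∧
      f.ker = ⨅ h ∈ T, MonoidHom.ker h := by
  classical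
  induction T using Finset.induction_on with
  | empty =>
    refine ⟨0, 1, fun v => ⟨1, Subsingleton.elim _ _⟩, ?_⟩
    simp
  | insert a T' hnm ih =>
    obtain ⟨k, f, hfs, hker⟩ := ih (fun h hh => hT h (Finset.mem_insert_of_mem hh))
    obtain ⟨k', g, hgs, hgker⟩ :=
      simpleResidual_step f hfs a (hT a (Finset.mem_insert_self a T'))
    refine ⟨k', g, hgs, ?_⟩
    rw [hgker, hker, Finset.iInf_insert, inf_comm]

end Aux

/-- For a finitely generated free group `R` and a finite
simple group `S`, the quotient `R/R(S)` is a finite direct power of `S`. -/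
theorem simpleResidual_quotient_of_free_group
    (ι : Type) [Finite ι] (S : Type) [Group S] [Finite S] [IsSimpleGroup S] :
    ∃ (k : ℕ) (f : FreeGroup ι →* (Fin k → S)),
      Function.Surjective f ∧ MonoidHom.ker f = simpleResidual (FreeGroup ι) S := by
  classical
  have hfin : Finite (FreeGroup ι →* S) := Finite.of_equiv _ FreeGroup.lift
  have := Fintype.ofFinite (FreeGroup ι →* S)
  set T : Finset (FreeGroup ι →* S) :=
    Finset.univ.filter (fun h => Function.Surjective h) with hT
  obtain ⟨k, f, hfs, hker⟩ := simpleResidual_finset T (fun h hh => by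
    simpa [hT] using (Finset.mem_filter.mp hh).2)
  refine ⟨k, f, hfs, ?_⟩
  rw [hker]
  apply le_antisymm
  · apply le_sInf
    rintro N ⟨m, g, hgs, rfl⟩
    intro r hr
    simp only [Subgroup.mem_iInf] at hr
    show g r = 1
    funext i
    have hi : Function.Surjective ((Pi.evalMonoidHom (fun _ : Fin m => S) i).comp g) :=
      (Function.surjective_eval i).comp hgs
    have hmem : (Pi.evalMonoidHom (fun _ : Fin m => S) i).comp g ∈ T := by
      simp only [hT, Finset.mem_filter, Finset.mem_univ, true_and]
      exact hi
    have := hr _ hmem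
    simpa [MonoidHom.mem_ker] using this
  · apply le_iInf₂
    intro h hhT
    have hhs : Function.Surjective h := by
      simpa [hT] using (Finset.mem_filter.mp hhT).2
    set g : FreeGroup ι →* (Fin 1 → S) :=
      MonoidHom.mk' (fun r _ => h r) (fun a b => by funext i; simp) with hg
    refine sInf_le ⟨1, g, ?_, ?_⟩
    · intro v
      obtain ⟨r, hr⟩ := hhs (v 0)
      exact ⟨r, funext fun i => by rw [Subsingleton.elim i 0]; simpa [hg] using hr⟩
    · ext r
      simp [hg, MonoidHom.mem_ker, funext_iff]
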